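/- Let k ≥ 1 be a natural number and let f be a nonzero rational function with complex coefficients. If the rational function (f')^k / f^{k−1} (where f' denotes the derivative of the rational function f) is a polynomial, i.e. lies in the image of ℂ[X] inside the field of rational functions, then f itself is a polynomial. -/

import Mathlib

open Polynomial

/-- Formal derivative of a rational function, via the quotient rule on
numerator and denominator. -/
noncomputable def RatFunc.deriv' {K : Type*} [Field K] (q : RatFunc K) : RatFunc K :=
  algebraMap K[X] (RatFunc K)
      (Polynomial.derivative q.num * q.denom - q.num * Polynomial.derivative q.denom) /
    algebraMap K[X] (RatFunc K) (q.denom ^ 2)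

private lemma rm_pow {p : ℂ[X]} (hp : p ≠ 0) (a : ℂ) (n : ℕ) :
    rootMultiplicity a (p ^ n) = n * rootMultiplicity a p := by
  induction n with
  | zero => simp [Polynomial.rootMultiplicity_eq_zero (by simp : ¬ (1 : ℂ[X]).IsRoot a)]
  | succ n ih =>
      rw [pow_succ, Polynomial.rootMultiplicity_mul (mul_ne_zero (pow_ne_zero _ hp) hp), ih]
      ring

theorem polynomial_of_polynomial_k_differential
    (k : ℕ) (hk : 1 ≤ k) (f : RatFunc ℂ) (hf : f ≠ 0)
    (hpoly : f.deriv' ^ k / f ^ (k - 1) ∈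
      Set.range (algebraMap ℂ[X] (RatFunc ℂ))) :
    f ∈ Set.range (algebraMap ℂ[X] (RatFunc ℂ)) := by
  set n : ℂ[X] := f.num with hn
  set d : ℂ[X] := f.denom with hd
  have hd0 : d ≠ 0 := f.denom_ne_zero
  have hn0 : n ≠ 0 := RatFunc.num_ne_zero hf
  by_cases hdeg : d.natDegree = 0
  · -- d is monic of degree 0, hence d = 1, so f is a polynomial
    have hd1 : d = 1 := (f.monic_denom).natDegree_eq_zero.mp hdeg
    refine ⟨n, ?_⟩
    have := f.num_div_denom
    rw [← hn, ← hd, hd1] at this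
    simpa using this
  · exfalso
    -- d has a root a of multiplicity m ≥ 1
    obtain ⟨a, ha⟩ : ∃ a, d.IsRoot a := by
      refine Complex.exists_root ?_
      rwa [Polynomial.natDegree_pos_iff_degree_pos.symm, Nat.pos_iff_ne_zero]
    set m : ℕ := rootMultiplicity a d with hm
    have hm1 : 1 ≤ m := (Polynomial.rootMultiplicity_pos hd0).2 ha
    -- a is not a root of n
    have hna : ¬ n.IsRoot a := by
      obtain ⟨u, v, huv⟩ := f.isCoprime_num_denom
      intro h
      have h2 := congrArg (Polynomial.eval a) huv
      simp only [Polynomial.eval_add, Polynomial.eval_mul, Polynomial.eval_one, ← hn, ← hd] at h2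
      rw [ha.eq_zero, h.eq_zero] at h2
      simp at h2
    have hrn : rootMultiplicity a n = 0 := Polynomial.rootMultiplicity_eq_zero hna
    -- derivative of d is nonzero
    have hd'0 : Polynomial.derivative d ≠ 0 := fun h =>
      hdeg (Polynomial.natDegree_eq_zero_of_derivative_eq_zero h)
    have hrd' : rootMultiplicity a (Polynomial.derivative d) = m - 1 :=
      Polynomial.derivative_rootMultiplicity_of_root ha
    set N : ℂ[X] := Polynomial.derivative n * d - n * Polynomial.derivative d with hN
    -- (X - a)^m does not divide n * d'
    have hnd' : ¬ (X - C a) ^ m ∣ n * Polynomial.derivative d := by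
      rw [Polynomial.le_rootMultiplicity_iff (mul_ne_zero hn0 hd'0) |>.symm.not,
        Polynomial.rootMultiplicity_mul (mul_ne_zero hn0 hd'0), hrn, hrd']
      omega
    -- hence (X - a)^m does not divide N
    have hNm : ¬ (X - C a) ^ m ∣ N := by
      intro h
      apply hnd'
      have h1 : (X - C a) ^ m ∣ Polynomial.derivative n * d :=
        Dvd.dvd.mul_left (Polynomial.pow_rootMultiplicity_dvd d a) _
      have : n * Polynomial.derivative d = Polynomial.derivative n * d - N := by ring
      rw [this]
      exact dvd_sub h1 h
    have hN0 : N ≠ 0 := fun h => hNm (h ▸ dvd_zero _)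
    have hNlow : (X - C a) ^ (m - 1) ∣ N := by
      apply dvd_sub
      · exact Dvd.dvd.mul_left
          (dvd_trans (pow_dvd_pow _ (Nat.sub_le m 1)) (Polynomial.pow_rootMultiplicity_dvd d a)) _
      · exact Dvd.dvd.mul_left (hrd' ▸ Polynomial.pow_rootMultiplicity_dvd (Polynomial.derivative d) a) _
    have hrN : rootMultiplicity a N = m - 1 := by
      refine le_antisymm ?_ ((Polynomial.le_rootMultiplicity_iff hN0).2 hNlow)
      rw [Polynomial.rootMultiplicity_le_iff hN0]
      rwa [Nat.sub_add_cancel hm1]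
    -- the polynomial identity
    obtain ⟨g, hg⟩ := hpoly
    have hfd : f.deriv' = algebraMap ℂ[X] (RatFunc ℂ) N / algebraMap ℂ[X] (RatFunc ℂ) (d ^ 2) := rfl
    have hfnd : f = algebraMap ℂ[X] (RatFunc ℂ) n / algebraMap ℂ[X] (RatFunc ℂ) d :=
      (f.num_div_denom).symm
    have hdne : algebraMap ℂ[X] (RatFunc ℂ) d ≠ 0 := RatFunc.algebraMap_ne_zero hd0
    have hnne : algebraMap ℂ[X] (RatFunc ℂ) n ≠ 0 := RatFunc.algebraMap_ne_zero hn0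
    have key : g * d ^ (2 * k) * n ^ (k - 1) = N ^ k * d ^ (k - 1) := by
      apply RatFunc.algebraMap_injective ℂ
      push_cast [map_mul, map_pow]
      rw [hg, hfd, hfnd, map_pow]
      rw [div_pow, div_pow, ← pow_mul, mul_comm 2 k, div_div_eq_mul_div]
      have hA := pow_ne_zero (k * 2) hdne
      have hB := pow_ne_zero (k - 1) hnne
      generalize (algebraMap ℂ[X] (RatFunc ℂ)) d ^ (k * 2) = A at hA ⊢
      generalize (algebraMap ℂ[X] (RatFunc ℂ)) n ^ (k - 1) = B at hB ⊢
      field_simp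
    have hg0 : g ≠ 0 := by
      intro h
      rw [h, zero_mul, zero_mul] at key
      exact mul_ne_zero (pow_ne_zero _ hN0) (pow_ne_zero _ hd0) key.symm
    have hcount := congrArg (rootMultiplicity a) key
    rw [Polynomial.rootMultiplicity_mul
          (mul_ne_zero (mul_ne_zero hg0 (pow_ne_zero _ hd0)) (pow_ne_zero _ hn0)),
        Polynomial.rootMultiplicity_mul (mul_ne_zero hg0 (pow_ne_zero _ hd0)),
        Polynomial.rootMultiplicity_mul (mul_ne_zero (pow_ne_zero _ hN0) (pow_ne_zero _ hd0)),
        rm_pow hd0, rm_pow hn0, rm_pow hN0, rm_pow hd0, hrn, hrN, ← hm] at hcount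
    clear_value m
    obtain ⟨m', rfl⟩ : ∃ m', m = m' + 1 := ⟨m - 1, by omega⟩
    obtain ⟨k', rfl⟩ : ∃ k', k = k' + 1 := ⟨k - 1, by omega⟩
    simp only [Nat.add_sub_cancel] at hcount
    ring_nf at hcount
    nlinarith [hcount]
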